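/- Let P = ∏_{j=1}^{l} y_j ∈ R_m be a product of l linearly independent affine forms. Then there exist l linearly independent affine forms y_1*,…,y_l* whose maximum variables are pairwise distinct such that P = ∏_{j=1}^{l} y_j*. -/
import Mathlib


open Finset Pointwise

/-- Points of the affine space `F_2^m`. -/
abbrev Point (m : ℕ) := Fin m → ZMod 2

/-- The ring `R_m = F_2[x_0,…,x_{m-1}]/(x_i^2 - x_i)`, identified with the ring of
functions `F_2^m → F_2` via the evaluation isomorphism `ev`. -/
abbrev Fn (m : ℕ) := Point m → ZMod 2

/-- The monomial `∏_{i ∈ S} x_i` (as the function it evaluates to). -/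
def monFn (m : ℕ) (S : Finset (Fin m)) : Fn m := fun u => ∏ i ∈ S, u i

/-- Hamming weight of `ev(P)`: the number of points where `P` takes the value 1. -/
def wt (m : ℕ) (P : Fn m) : ℕ := (Finset.univ.filter fun u => P u = 1).card

/-- The monomial code `C(I)`: the `F_2`-span of the evaluations of the monomials in `I`. -/
def code (m : ℕ) (I : Set (Finset (Fin m))) : Submodule (ZMod 2) (Fn m) :=
  Submodule.span (ZMod 2) (monFn m '' I)

/-- `f ≼_sh g` for monomials of equal degree: the sorted index lists compare entrywise. -/
def shLE (m : ℕ) (S T : Finset (Fin m)) : Prop :=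
  S.card = T.card ∧
    ∀ (ℓ : ℕ) (hS : ℓ < (S.sort (· ≤ ·)).length) (hT : ℓ < (T.sort (· ≤ ·)).length),
      (S.sort (· ≤ ·)).get ⟨ℓ, hS⟩ ≤ (T.sort (· ≤ ·)).get ⟨ℓ, hT⟩

/-- `f ≼ g` iff there is a monomial `g*` with `f ≼_sh g* ≼_w g`. -/
def pre (m : ℕ) (S T : Finset (Fin m)) : Prop :=
  ∃ U : Finset (Fin m), shLE m S U ∧ U ⊆ T

/-- A decreasing set of monomials. -/
def Decreasing (m : ℕ) (I : Set (Finset (Fin m))) : Prop :=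
  ∀ f ∈ I, ∀ g : Finset (Fin m), pre m g f → g ∈ I

/-- The affine map `u ↦ B u + ε` on `F_2^m`. -/
def affMap (m : ℕ) (B : Fin m → Fin m → ZMod 2) (ε : Point m) (u : Point m) : Point m :=
  fun i => (∑ j, B i j * u j) + ε i

/-- `B` is lower triangular with unit diagonal. -/
def IsLT (m : ℕ) (B : Fin m → Fin m → ZMod 2) : Prop :=
  (∀ i, B i i = 1) ∧ ∀ i j : Fin m, i < j → B i j = 0

/-- The action of `(B,ε) ∈ LTA(m,2)` on `R_m`: substitute `x_i ↦ x_i + Σ_{j<i} b_{i,j} x_j + ε_i`.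
In the function representation this is precomposition with the affine map. -/
def act (m : ℕ) (B : Fin m → Fin m → ZMod 2) (ε : Point m) (P : Fn m) : Fn m :=
  fun u => P (affMap m B ε u)

/-- The orbit `LTA(m,2)·P`. -/
def orbit (m : ℕ) (P : Fn m) : Set (Fn m) :=
  {Q | ∃ B ε, IsLT m B ∧ Q = act m B ε P}

/-- Membership in the subgroup `LTA(m,2)_g` for the monomial `g` with index set `S`:
`ε_i = 0` if `i ∉ ind(g)`, and `b_{i,j} = 0` (off the diagonal) if `i ∉ ind(g)` or `j ∈ ind(g)`. -/
def IsLTsub (m : ℕ) (S : Finset (Fin m)) (B : Fin m → Fin m → ZMod 2) (ε : Point m) : Prop :=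
  IsLT m B ∧ (∀ i, i ∉ S → ε i = 0) ∧
    ∀ i j : Fin m, j ≠ i → (i ∉ S ∨ j ∈ S) → B i j = 0

/-- The orbit `LTA(m,2)_g · P` where `S = ind(g)`. -/
def orbitSub (m : ℕ) (S : Finset (Fin m)) (P : Fn m) : Set (Fn m) :=
  {Q | ∃ B ε, IsLTsub m S B ε ∧ Q = act m B ε P}

/-- `λ_f(i) = |{j : j < i, j ∉ ind(f)}|` where `S = ind(f)`. -/
def lam (m : ℕ) (S : Finset (Fin m)) (i : Fin m) : ℕ :=
  (Finset.univ.filter fun j => j < i ∧ j ∉ S).card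

/-- `|λ_f(g)| = Σ_{i ∈ ind(g)} λ_f(i)`. -/
def lamSum (m : ℕ) (S T : Finset (Fin m)) : ℕ := ∑ i ∈ T, lam m S i

/-- The affine form `c + Σ_i a_i x_i`. -/
def affForm (m : ℕ) (c : ZMod 2) (a : Point m) : Fn m := fun u => c + ∑ i, a i * u i

/-- `deg(P) ≤ r`: `P` lies in the span of the (multilinear) monomials of degree at most `r`. -/
def degLE (m : ℕ) (P : Fn m) (r : ℕ) : Prop :=
  P ∈ Submodule.span (ZMod 2)
    {Q : Fn m | ∃ S : Finset (Fin m), S.card ≤ r ∧ Q = monFn m S}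

section Aux

open Submodule Module Set Function

lemma zmod2_cases (x : ZMod 2) : x = 0 ∨ x = 1 := by revert x; decide

lemma zmod2_eq_of_iff {x y : ZMod 2} (h : x = 1 ↔ y = 1) : x = y := by
  revert h; revert x y; decide

lemma zmod2_prod_eq_one_iff {l : ℕ} (v : Fin l → ZMod 2) :
    ∏ j, v j = 1 ↔ ∀ j, v j = 1 := by
  constructor
  · intro h j
    by_contra hj
    have hv0 : v j = 0 := (zmod2_cases (v j)).resolve_right hj
    have : ∏ j, v j = 0 := Finset.prod_eq_zero (Finset.mem_univ j) hv0
    rw [this] at h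
    exact absurd h (by decide)
  · intro h
    exact Finset.prod_eq_one fun j _ => h j

/-- Echelon basis lemma: any `l`-dimensional subspace of `F_2^m` has a basis whose
pivot (maximum) variables are pairwise distinct. -/
lemma echelon_basis (m : ℕ) : ∀ (l : ℕ) (W : Submodule (ZMod 2) (Point m)),
    Module.finrank (ZMod 2) W = l →
    ∃ (b : Fin l → Point m) (t : Fin l → Fin m),
      LinearIndependent (ZMod 2) b ∧
      Submodule.span (ZMod 2) (Set.range b) = W ∧
      Function.Injective t ∧
      ∀ j, b j (t j) ≠ 0 ∧ ∀ i, t j < i → b j i = 0 := by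
  intro l
  induction l with
  | zero =>
    intro W hW
    refine ⟨Fin.elim0, Fin.elim0, linearIndependent_empty_type, ?_,
      fun j => j.elim0, fun j => j.elim0⟩
    rw [Set.range_eq_empty, Submodule.span_empty]
    exact (Submodule.finrank_eq_zero.mp hW).symm
  | succ l ih =>
    intro W hW
    classical
    have hWbot : W ≠ ⊥ := by
      intro h
      rw [h] at hW
      simp [finrank_bot] at hW
    obtain ⟨v0, hv0W, hv0⟩ := Submodule.exists_mem_ne_zero_of_ne_bot hWbot
    set S : Finset (Fin m) := Finset.univ.filter (fun i => ∃ v ∈ W, v i ≠ 0) with hS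
    have hSne : S.Nonempty := by
      obtain ⟨i, hi⟩ := Function.ne_iff.mp hv0
      exact ⟨i, by simp [hS]; exact ⟨v0, hv0W, by simpa using hi⟩⟩
    set p : Fin m := S.max' hSne with hp
    obtain ⟨w, hwW, hwp⟩ : ∃ v ∈ W, v p ≠ 0 := by
      have hmem := S.max'_mem hSne
      exact (Finset.mem_filter.mp hmem).2
    have hmax : ∀ v ∈ W, ∀ i, p < i → v i = 0 := by
      intro v hv i hpi
      by_contra hvi
      have hiS : i ∈ S := by simp [hS]; exact ⟨v, hv, hvi⟩
      exact absurd (S.le_max' i hiS) (not_le.mpr hpi)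
    have hwp1 : w p = 1 := (zmod2_cases (w p)).resolve_left hwp
    -- the coordinate-p functional on W
    set f : W →ₗ[ZMod 2] ZMod 2 := (LinearMap.proj p).comp W.subtype with hf
    set U : Submodule (ZMod 2) (Point m) := (LinearMap.ker f).map W.subtype with hUdef
    have hmemU : ∀ v, v ∈ U ↔ v ∈ W ∧ v p = 0 := by
      intro v
      constructor
      · rintro ⟨x, hx, rfl⟩
        exact ⟨x.2, hx⟩
      · rintro ⟨hvW, hvp⟩
        exact ⟨⟨v, hvW⟩, hvp, rfl⟩
    have hUW : U ≤ W := by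
      intro v hv; exact ((hmemU v).mp hv).1
    have hrange : Module.finrank (ZMod 2) (LinearMap.range f) = 1 := by
      have h1 : LinearMap.range f ≠ ⊥ := by
        intro h
        have hm : f ⟨w, hwW⟩ ∈ LinearMap.range f := LinearMap.mem_range_self f _
        rw [h, Submodule.mem_bot] at hm
        exact hwp hm
      have h2 : Module.finrank (ZMod 2) (LinearMap.range f) ≤ 1 := by
        simpa using Submodule.finrank_le (LinearMap.range f)
      have h3 : Module.finrank (ZMod 2) (LinearMap.range f) ≠ 0 := by
        intro h; exact h1 (Submodule.finrank_eq_zero.mp h)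
      omega
    have hker : Module.finrank (ZMod 2) (LinearMap.ker f) = l := by
      have := LinearMap.finrank_range_add_finrank_ker f
      rw [hW, hrange] at this
      omega
    have hU : Module.finrank (ZMod 2) U = l := by
      rw [hUdef, Submodule.finrank_map_subtype_eq]; exact hker
    obtain ⟨b', t', hli', hspan', hinj', hpiv'⟩ := ih U hU
    have hb'U : ∀ j, b' j ∈ U := by
      intro j
      rw [← hspan']
      exact Submodule.subset_span (Set.mem_range_self j)
    have ht'p : ∀ j, t' j < p := by
      intro j
      rcases lt_trichotomy (t' j) p with h | h | h
      · exact h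
      · exfalso
        have := ((hmemU _).mp (hb'U j)).2
        rw [← h] at this
        exact (hpiv' j).1 this
      · exfalso
        exact (hpiv' j).1 (hmax _ (hUW (hb'U j)) _ h)
    refine ⟨Fin.cons w b', Fin.cons p t', ?_, ?_, ?_, ?_⟩
    · rw [linearIndependent_fin_cons]
      refine ⟨hli', ?_⟩
      rw [hspan']
      intro hwU
      exact hwp ((hmemU w).mp hwU).2
    · rw [Fin.range_cons]
      apply le_antisymm
      · rw [Submodule.span_le]
        intro v hv
        rcases hv with rfl | hv
        · exact hwW
        · obtain ⟨j, rfl⟩ := hv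
          exact hUW (hb'U j)
      · intro v hvW
        have hsub : v - v p • w ∈ U := by
          rw [hmemU]
          refine ⟨Submodule.sub_mem _ hvW (Submodule.smul_mem _ _ hwW), ?_⟩
          simp [hwp1]
        have h1 : v - v p • w ∈ Submodule.span (ZMod 2) (insert w (Set.range b')) := by
          apply Submodule.span_mono (Set.subset_insert w _)
          rw [hspan']; exact hsub
        have h2 : v p • w ∈ Submodule.span (ZMod 2) (insert w (Set.range b')) :=
          Submodule.smul_mem _ _ (Submodule.subset_span (Set.mem_insert w _))
        have := Submodule.add_mem _ h2 h1
        simpa using this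
    · rw [Fin.cons_injective_iff]
      refine ⟨?_, hinj'⟩
      rintro ⟨j, hj⟩
      exact absurd hj (ne_of_lt (ht'p j))
    · intro j
      refine Fin.cases ?_ ?_ j
      · exact ⟨by simpa using hwp, fun i hi => hmax w hwW i (by simpa using hi)⟩
      · intro j'
        simpa using hpiv' j'

lemma dot_span_iff {m l : ℕ} (a : Fin l → Point m) (v : Point m) :
    (∀ j, ∑ i, a j i * v i = 0) ↔
      ∀ w ∈ Submodule.span (ZMod 2) (Set.range a), ∑ i, w i * v i = 0 := by
  set D : Point m →ₗ[ZMod 2] ZMod 2 :=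
    { toFun := fun w => ∑ i, w i * v i
      map_add' := by
        intro x y
        simp [add_mul, Finset.sum_add_distrib]
      map_smul' := by
        intro r x
        simp [Finset.mul_sum, mul_assoc] } with hD
  constructor
  · intro h w hw
    have hsub : Set.range a ⊆ (LinearMap.ker D : Set (Point m)) := by
      rintro _ ⟨j, rfl⟩
      exact h j
    have := Submodule.span_le.mpr hsub
    exact this hw
  · intro h j
    exact h (a j) (Submodule.subset_span (Set.mem_range_self j))

lemma surj_of_li {m l : ℕ} (a : Fin l → Point m) (hli : LinearIndependent (ZMod 2) a) :
    ∀ d : Fin l → ZMod 2, ∃ u : Point m, ∀ j, ∑ i, a j i * u i = d j := by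
  intro d
  set A : Matrix (Fin l) (Fin m) (ZMod 2) := Matrix.of a with hA
  have hrank : A.rank = l := by
    have : LinearIndependent (ZMod 2) A := hli
    simpa using this.rank_matrix
  have htop : LinearMap.range A.mulVecLin = ⊤ := by
    apply Submodule.eq_top_of_finrank_eq
    rw [show Module.finrank (ZMod 2) (LinearMap.range A.mulVecLin) = A.rank from rfl, hrank]
    simp [Module.finrank_pi]
  have hsurj : Function.Surjective A.mulVecLin := LinearMap.range_eq_top.mp htop
  obtain ⟨u, hu⟩ := hsurj d
  refine ⟨u, fun j => ?_⟩
  have := congrFun hu j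
  simpa [Matrix.mulVecLin_apply, Matrix.mulVec, dotProduct, hA] using this

end Aux


/-- a product of `l` linearly independent affine forms can be rewritten as a
product of `l` linearly independent affine forms whose maximum variables are pairwise
distinct. -/
theorem stmt5 (m : ℕ) (hm : 1 ≤ m) (l : ℕ) (c : Fin l → ZMod 2) (a : Fin l → Point m)
    (hli : LinearIndependent (ZMod 2) a) (P : Fn m)
    (hP : P = ∏ j, affForm m (c j) (a j)) :
    ∃ (c' : Fin l → ZMod 2) (a' : Fin l → Point m) (t : Fin l → Fin m),
      LinearIndependent (ZMod 2) a' ∧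
      (∀ j, a' j (t j) ≠ 0 ∧ ∀ i : Fin m, t j < i → a' j i = 0) ∧
      Function.Injective t ∧
      P = ∏ j, affForm m (c' j) (a' j) := by
  classical
  have hW : Module.finrank (ZMod 2) (Submodule.span (ZMod 2) (Set.range a)) = l := by
    rw [finrank_span_eq_card hli, Fintype.card_fin]
  obtain ⟨b, t, hlib, hspanb, hinjt, hpivb⟩ := echelon_basis m l _ hW
  obtain ⟨u0, hu0⟩ := surj_of_li a hli (fun j => 1 + c j)
  refine ⟨fun j => 1 + ∑ i, b j i * u0 i, b, t, hlib, hpivb, hinjt, ?_⟩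
  rw [hP]
  funext u
  rw [Finset.prod_apply, Finset.prod_apply]
  apply zmod2_eq_of_iff
  rw [zmod2_prod_eq_one_iff, zmod2_prod_eq_one_iff]
  set v : Point m := fun i => u i - u0 i with hv
  have claim1 : ∀ j, (affForm m (c j) (a j) u = 1) ↔ (∑ i, a j i * v i = 0) := by
    intro j
    have hsplit : ∑ i, a j i * v i = (∑ i, a j i * u i) - ∑ i, a j i * u0 i := by
      simp [hv, mul_sub, Finset.sum_sub_distrib]
    rw [hsplit, hu0 j]
    simp only [affForm]
    generalize (∑ i, a j i * u i) = s
    revert s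
    generalize c j = cc
    revert cc
    decide
  have claim2 : ∀ j, (affForm m (1 + ∑ i, b j i * u0 i) (b j) u = 1) ↔
      (∑ i, b j i * v i = 0) := by
    intro j
    have hsplit : ∑ i, b j i * v i = (∑ i, b j i * u i) - ∑ i, b j i * u0 i := by
      simp [hv, mul_sub, Finset.sum_sub_distrib]
    rw [hsplit]
    simp only [affForm]
    generalize (∑ i, b j i * u i) = s
    generalize (∑ i, b j i * u0 i) = s0
    revert s s0
    decide
  simp only [claim1, claim2]
  rw [dot_span_iff a v, dot_span_iff b v, hspanb]
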